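/- Let τ be a finite Wang tileset viewed as a directed multigraph G on colors (vertices are the east/west colors, each tile gives an edge from its west color to its east color). Suppose t ∈ τ is a tile such that there is no directed path in G from the east color of t to the west color of t. Then τ tiles the plane if and only if τ \ {t} tiles the plane. -/
import Mathlib


structure WangTile (C : Type) where
  e : C
  w : C
  n : C
  s : C
deriving DecidableEq

def IsTiling {C : Type} (τ : Set (WangTile C)) (f : ℤ → ℤ → WangTile C) : Prop :=
  (∀ i j, f i j ∈ τ) ∧ (∀ i j, (f i j).e = (f (i+1) j).w) ∧
    (∀ i j, (f i j).n = (f i (j+1)).s)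

/-- One step in the graph of a tileset: an edge from the west color to the east color. -/
def Step {C : Type} (τ : Set (WangTile C)) (u v : C) : Prop :=
  ∃ t ∈ τ, t.w = u ∧ t.e = v

instance {C : Type} [Fintype C] [DecidableEq C] : Fintype (WangTile C) :=
  Fintype.ofSurjective (fun p : C × C × C × C => ⟨p.1, p.2.1, p.2.2.1, p.2.2.2⟩)
    (fun t => ⟨⟨t.e, t.w, t.n, t.s⟩, rfl⟩)

lemma row_path {C : Type} (τ : Set (WangTile C)) (f : ℤ → ℤ → WangTile C)
    (hf : IsTiling τ f) (i : ℤ) (j : ℤ) (k : ℕ) :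
    Relation.ReflTransGen (Step τ) ((f i j).w) ((f (i + k) j).w) := by
  induction k with
  | zero => simpa using Relation.ReflTransGen.refl
  | succ k ih =>
    refine ih.tail ⟨f (i + k) j, hf.1 _ _, rfl, ?_⟩
    have h := hf.2.1 (i + k) j
    have : (i : ℤ) + (k + 1 : ℕ) = (i + k) + 1 := by push_cast; ring
    rw [this, ← h]

lemma once_aux {C : Type} (τ : Set (WangTile C)) (f : ℤ → ℤ → WangTile C)
    (hf : IsTiling τ f) (t : WangTile C)
    (hnopath : ¬ Relation.ReflTransGen (Step τ) t.e t.w)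
    {i i' j : ℤ} (h1 : f i j = t) (h2 : f i' j = t) (hlt : i < i') : False := by
  obtain ⟨k, hk⟩ : ∃ k : ℕ, i' = (i + 1) + k := ⟨(i' - (i + 1)).toNat, by omega⟩
  have hpath := row_path τ f hf (i + 1) j k
  rw [← hk] at hpath
  have hw : (f (i + 1) j).w = t.e := by rw [← hf.2.1 i j, h1]
  rw [hw, h2] at hpath
  exact hnopath hpath

lemma once_per_row {C : Type} (τ : Set (WangTile C)) (f : ℤ → ℤ → WangTile C)
    (hf : IsTiling τ f) (t : WangTile C)
    (hnopath : ¬ Relation.ReflTransGen (Step τ) t.e t.w)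
    {i i' j : ℤ} (h1 : f i j = t) (h2 : f i' j = t) : i = i' := by
  rcases lt_trichotomy i i' with h | h | h
  · exact absurd (once_aux τ f hf t hnopath h1 h2 h) (fun x => x)
  · exact h
  · exact absurd (once_aux τ f hf t hnopath h2 h1 h) (fun x => x)

/-- For each window size there is a horizontal shift avoiding `t` on the window. -/
lemma shift_avoid {C : Type} (τ : Set (WangTile C)) (f : ℤ → ℤ → WangTile C)
    (hf : IsTiling τ f) (t : WangTile C)
    (hnopath : ¬ Relation.ReflTransGen (Step τ) t.e t.w) (n : ℕ) :
    ∃ a : ℤ, ∀ i j : ℤ, |i| ≤ (n : ℤ) → |j| ≤ (n : ℤ) → f (i + a) j ≠ t := by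
  set K : Set ℤ := {a | ∃ i j : ℤ, |i| ≤ (n : ℤ) ∧ |j| ≤ (n : ℤ) ∧ f (i + a) j = t} with hK
  have hKsub : K ⊆ ⋃ j ∈ Set.Icc (-(n : ℤ)) n, ⋃ i ∈ Set.Icc (-(n : ℤ)) n,
      {a : ℤ | f (i + a) j = t} := by
    rintro a ⟨i, j, hi, hj, hfa⟩
    rw [abs_le] at hi hj
    simp only [Set.mem_iUnion, Set.mem_Icc]
    exact ⟨j, ⟨hj.1, hj.2⟩, i, ⟨hi.1, hi.2⟩, hfa⟩
  have hfin : K.Finite := by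
    refine Set.Finite.subset ?_ hKsub
    refine Set.Finite.biUnion (Set.finite_Icc _ _) (fun j _ => ?_)
    refine Set.Finite.biUnion (Set.finite_Icc _ _) (fun i _ => ?_)
    refine Set.Subsingleton.finite ?_
    intro a ha b hb
    have := once_per_row τ f hf t hnopath ha hb
    omega
  obtain ⟨a, ha⟩ := hfin.infinite_compl.nonempty
  refine ⟨a, fun i j hi hj hfa => ha ⟨i, j, hi, hj, hfa⟩⟩

theorem stmt1 {C : Type} [Fintype C] [DecidableEq C] (τ : Finset (WangTile C))
    (t : WangTile C) (ht : t ∈ τ)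
    (hnopath : ¬ Relation.ReflTransGen (Step (↑τ : Set (WangTile C))) t.e t.w) :
    (∃ f, IsTiling (↑τ : Set (WangTile C)) f) ↔
      (∃ f, IsTiling (↑(τ.erase t) : Set (WangTile C)) f) := by
  constructor
  · rintro ⟨f, hf⟩
    -- choose shifts avoiding t on windows
    choose a ha using fun n => shift_avoid (↑τ) f hf t hnopath n
    set g : ℕ → ℤ → ℤ → WangTile C := fun n i j => f (i + a n) j with hg
    have hgtile : ∀ n, IsTiling (↑τ) (g n) := by
      intro n
      refine ⟨fun i j => hf.1 _ _, fun i j => ?_, fun i j => ?_⟩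
      · have := hf.2.1 (i + a n) j
        simpa [hg, add_right_comm] using this
      · exact hf.2.2 (i + a n) j
    have hgavoid : ∀ (n : ℕ) (i j : ℤ), |i| ≤ (n : ℤ) → |j| ≤ (n : ℤ) → g n i j ≠ t :=
      fun n i j hi hj => ha n i j hi hj
    -- ultrafilter limit
    let U : Ultrafilter ℕ := Ultrafilter.of Filter.cofinite
    have hU : ∀ s : Set ℕ, s ∈ Filter.cofinite → s ∈ U := fun s hs =>
      Ultrafilter.of_le Filter.cofinite hs
    have hex : ∀ i j : ℤ, ∃ v : WangTile C, {n : ℕ | g n i j = v} ∈ U := by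
      intro i j
      by_contra hcon
      push_neg at hcon
      have hcompl : ∀ v : WangTile C, {n : ℕ | g n i j ≠ v} ∈ U := by
        intro v
        have := hcon v
        rwa [← Ultrafilter.compl_mem_iff_notMem] at this
      have hall : {n : ℕ | ∀ v : WangTile C, g n i j ≠ v} ∈ U := by
        have : (⋂ v ∈ (Finset.univ : Finset (WangTile C)), {n : ℕ | g n i j ≠ v}) ∈ U :=
          (Filter.biInter_finset_mem _).2 (fun v _ => hcompl v)
        refine Filter.mem_of_superset this ?_
        intro n hn v
        simp only [Set.mem_iInter] at hn
        exact hn v (Finset.mem_univ v)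
      obtain ⟨n, hn⟩ := Ultrafilter.nonempty_of_mem hall
      exact hn (g n i j) rfl
    choose G hG using hex
    refine ⟨G, ?_, ?_, ?_⟩
    · intro i j
      have hwin : {n : ℕ | (max i.natAbs j.natAbs) ≤ n} ∈ U := by
        apply hU
        rw [Filter.mem_cofinite]
        refine (Set.finite_Iio (max i.natAbs j.natAbs)).subset ?_
        intro m hm
        simp only [Set.mem_compl_iff, Set.mem_setOf_eq, not_le] at hm
        simpa using hm
      obtain ⟨n, hn1, hn2⟩ := Ultrafilter.nonempty_of_mem (Filter.inter_mem (hG i j) hwin)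
      simp only [Set.mem_setOf_eq] at hn2
      have hne : g n i j ≠ t := by
        apply hgavoid n i j <;> rw [abs_le] <;> omega
      rw [← hn1]
      simp only [Finset.coe_erase, Set.mem_diff, Set.mem_singleton_iff]
      exact ⟨hf.1 _ _, hne⟩
    · intro i j
      obtain ⟨n, hn1, hn2⟩ :=
        Ultrafilter.nonempty_of_mem (Filter.inter_mem (hG i j) (hG (i + 1) j))
      rw [← hn1, ← hn2]
      exact (hgtile n).2.1 i j
    · intro i j
      obtain ⟨n, hn1, hn2⟩ :=
        Ultrafilter.nonempty_of_mem (Filter.inter_mem (hG i j) (hG i (j + 1)))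
      rw [← hn1, ← hn2]
      exact (hgtile n).2.2 i j
  · rintro ⟨f, hf⟩
    refine ⟨f, fun i j => ?_, hf.2.1, hf.2.2⟩
    have := hf.1 i j
    simp only [Finset.coe_erase, Set.mem_diff] at this
    exact this.1
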